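/- arXiv:1108.5342 — 4 statements merged into one kernel-verified Lean document; each statement's English description precedes it below -/
import Mathlib

section
/- Let $q \geq 3$, let $r$ be an integer with $2 \leq r \leq \phi(q)/4$, let $a_1,\dots,a_r$ be distinct residues mod $q$ coprime to $q$, and let $t \in \mathbb{R}^r$ be nonzero. Then the number of non-principal Dirichlet characters $\chi$ mod $q$ satisfying $|\sum_{j=1}^r \chi(a_j) t_j| \geq \|t\|/2$ is at least $\phi(q)/(2r)$, where $\|t\|$ is the Euclidean norm. -/
open Finset

/-- Let `q ≥ 3`, let `r` be an integer with `2 ≤ r ≤ φ(q)/4`, let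
`a 1, …, a r` be distinct residues mod `q` coprime to `q`, and let `t ∈ ℝ^r` be nonzero.
Then the number of non-principal Dirichlet characters `χ` mod `q` with
`|∑ j, χ (a j) * t j| ≥ ‖t‖/2` is at least `φ(q)/(2r)`. -/
theorem stmt0 (q : ℕ) (hq : 3 ≤ q) (r : ℕ) (hr2 : 2 ≤ r)
    (hr : (r : ℝ) ≤ (Nat.totient q : ℝ) / 4)
    (a : Fin r → ZMod q) (ha_inj : Function.Injective a)
    (ha_unit : ∀ j, IsUnit (a j))
    (t : EuclideanSpace ℝ (Fin r)) (ht : t ≠ 0) :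
    (Nat.totient q : ℝ) / (2 * r) ≤
      Nat.card {χ : DirichletCharacter ℂ q //
        χ ≠ 1 ∧ ‖t‖ / 2 ≤ ‖∑ j, χ (a j) * (t j : ℂ)‖} := by
  classical
  have : NeZero q := ⟨by omega⟩
  set φ : ℕ := q.totient with hφ
  have hφpos : 0 < φ := Nat.totient_pos.mpr (by omega)
  set S : DirichletCharacter ℂ q → ℂ := fun χ => ∑ j, χ (a j) * (t j : ℂ) with hS
  set T : ℝ := ∑ j, (t j) ^ 2 with hT
  have htnorm : ‖t‖ ^ 2 = T := by
    rw [EuclideanSpace.norm_eq, Real.sq_sqrt (by positivity)]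
    simp [Real.norm_eq_abs, sq_abs, hT]
  have hTpos : 0 < T := by
    rw [← htnorm]
    have : ‖t‖ ≠ 0 := norm_ne_zero_iff.mpr ht
    positivity
  -- conjugation of character values
  have conj_apply : ∀ (χ : DirichletCharacter ℂ q) (k : Fin r),
      (starRingEnd ℂ) (χ (a k)) = χ ((a k)⁻¹) := by
    intro χ k
    have h1 : (starRingEnd ℂ) (χ (a k)) = star (χ (a k)) := rfl
    rw [h1, MulChar.star_apply', MulChar.inv_apply]
    congr 1
    obtain ⟨u, hu⟩ := ha_unit k
    rw [← hu, Ring.inverse_unit, ← ZMod.inv_coe_unit]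
  -- orthogonality
  have keyC : ∑ χ : DirichletCharacter ℂ q, S χ * (starRingEnd ℂ) (S χ)
      = (φ : ℂ) * ∑ j, (t j : ℂ) ^ 2 := by
    have step1 : ∀ χ : DirichletCharacter ℂ q, S χ * (starRingEnd ℂ) (S χ)
        = ∑ j, ∑ k, (t j : ℂ) * (t k : ℂ) * (χ ((a k)⁻¹) * χ (a j)) := by
      intro χ
      rw [hS]
      simp only [map_sum, map_mul, Complex.conj_ofReal, conj_apply χ, Finset.sum_mul_sum]
      exact Finset.sum_congr rfl fun j _ => Finset.sum_congr rfl fun k _ => by ring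
    calc ∑ χ : DirichletCharacter ℂ q, S χ * (starRingEnd ℂ) (S χ)
        = ∑ χ : DirichletCharacter ℂ q, ∑ j, ∑ k,
            (t j : ℂ) * (t k : ℂ) * (χ ((a k)⁻¹) * χ (a j)) :=
          Finset.sum_congr rfl fun χ _ => step1 χ
      _ = ∑ j, ∑ k, (t j : ℂ) * (t k : ℂ) *
            ∑ χ : DirichletCharacter ℂ q, χ ((a k)⁻¹) * χ (a j) := by
          rw [Finset.sum_comm]
          refine Finset.sum_congr rfl fun j _ => ?_
          rw [Finset.sum_comm]
          exact Finset.sum_congr rfl fun k _ => by rw [Finset.mul_sum]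
      _ = ∑ j, ∑ k, (t j : ℂ) * (t k : ℂ) *
            (if a k = a j then (φ : ℂ) else 0) := by
          refine Finset.sum_congr rfl fun j _ => Finset.sum_congr rfl fun k _ => ?_
          rw [DirichletCharacter.sum_char_inv_mul_char_eq ℂ (ha_unit k) (a j)]
      _ = (φ : ℂ) * ∑ j, (t j : ℂ) ^ 2 := by
          rw [Finset.mul_sum]
          refine Finset.sum_congr rfl fun j _ => ?_
          rw [Finset.sum_eq_single j]
          · simp [if_pos rfl]; ring
          · intro k _ hk
            rw [if_neg (fun h => hk (ha_inj h)), mul_zero]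
          · simp
  have keyR : ∑ χ : DirichletCharacter ℂ q, Complex.normSq (S χ) = (φ : ℝ) * T := by
    have h := keyC
    simp only [Complex.mul_conj] at h
    have h2 : ((∑ χ : DirichletCharacter ℂ q, Complex.normSq (S χ) : ℝ) : ℂ)
        = (((φ : ℝ) * T : ℝ) : ℂ) := by
      push_cast
      convert h using 2
      rw [hT]
      push_cast
      rfl
    exact_mod_cast h2
  -- pointwise bound
  have hnorm1 : ∀ (χ : DirichletCharacter ℂ q) (j : Fin r), ‖χ (a j)‖ = 1 := by
    intro χ j
    have := DirichletCharacter.unit_norm_eq_one χ (ha_unit j).unit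
    rwa [IsUnit.unit_spec] at this
  have hpoint : ∀ χ : DirichletCharacter ℂ q, Complex.normSq (S χ) ≤ (r : ℝ) * T := by
    intro χ
    have h1 : ‖S χ‖ ≤ ∑ j, |t j| := by
      refine (norm_sum_le _ _).trans_eq ?_
      refine Finset.sum_congr rfl fun j _ => ?_
      rw [norm_mul, hnorm1 χ j, one_mul, Complex.norm_real, Real.norm_eq_abs]
    have h2 : (∑ j, |t j|) ^ 2 ≤ (r : ℝ) * T := by
      have := sq_sum_le_card_mul_sum_sq (s := (Finset.univ : Finset (Fin r)))
        (f := fun j => |t j|)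
      simpa [hT, sq_abs] using this
    calc Complex.normSq (S χ) = ‖S χ‖ ^ 2 := (Complex.sq_norm _).symm
      _ ≤ (∑ j, |t j|) ^ 2 := by
          apply pow_le_pow_left₀ (norm_nonneg _) h1
      _ ≤ (r : ℝ) * T := h2
  -- counting
  set P : DirichletCharacter ℂ q → Prop :=
    fun χ => χ ≠ 1 ∧ ‖t‖ / 2 ≤ ‖S χ‖ with hP
  set N : ℕ := (Finset.univ.filter P).card with hN
  have hcard : Nat.card {χ : DirichletCharacter ℂ q //
      χ ≠ 1 ∧ ‖t‖ / 2 ≤ ‖∑ j, χ (a j) * (t j : ℂ)‖} = N := by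
    rw [Nat.card_eq_fintype_card, Fintype.card_subtype]
  have hcardU : (Finset.univ : Finset (DirichletCharacter ℂ q)).card = φ := by
    rw [Finset.card_univ, ← Nat.card_eq_fintype_card,
      DirichletCharacter.card_eq_totient_of_hasEnoughRootsOfUnity ℂ q]
  -- split the sum
  have hsplit : (φ : ℝ) * T ≤ (N : ℝ) * ((r : ℝ) * T) + ((r : ℝ) * T + (φ : ℝ) * (T / 4)) := by
    rw [← keyR, ← Finset.sum_filter_add_sum_filter_not Finset.univ P]
    gcongr
    · calc ∑ χ ∈ Finset.univ.filter P, Complex.normSq (S χ)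
          ≤ ∑ _χ ∈ Finset.univ.filter P, (r : ℝ) * T :=
            Finset.sum_le_sum fun χ _ => hpoint χ
        _ = (N : ℝ) * ((r : ℝ) * T) := by rw [Finset.sum_const, hN]; simp [mul_comm]
    · set B := Finset.univ.filter (fun χ => ¬ P χ) with hB
      have hsub : B ⊆ insert 1 (B.erase 1) := by
        intro χ hχ
        by_cases h : χ = 1
        · simp [h]
        · exact Finset.mem_insert_of_mem (Finset.mem_erase.mpr ⟨h, hχ⟩)
      calc ∑ χ ∈ B, Complex.normSq (S χ)
          ≤ ∑ χ ∈ insert 1 (B.erase 1), Complex.normSq (S χ) :=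
            Finset.sum_le_sum_of_subset_of_nonneg hsub
              (fun χ _ _ => Complex.normSq_nonneg _)
        _ ≤ (r : ℝ) * T + (φ : ℝ) * (T / 4) := by
            rw [Finset.sum_insert (by simp)]
            gcongr
            · exact hpoint 1
            · calc ∑ χ ∈ B.erase 1, Complex.normSq (S χ)
                  ≤ ∑ _χ ∈ B.erase 1, T / 4 := by
                    refine Finset.sum_le_sum fun χ hχ => ?_
                    rw [Finset.mem_erase, hB, Finset.mem_filter] at hχ
                    obtain ⟨hne, _, hnP⟩ := hχ
                    have habs : ‖S χ‖ < ‖t‖ / 2 := by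
                      by_contra hcon
                      exact hnP ⟨hne, le_of_not_gt hcon⟩
                    have : Complex.normSq (S χ) = ‖S χ‖ ^ 2 :=
                      (Complex.sq_norm _).symm
                    rw [this]
                    have h4 : (‖t‖ / 2) ^ 2 = T / 4 := by
                      rw [div_pow, htnorm]; norm_num
                    rw [← h4]
                    exact pow_le_pow_left₀ (norm_nonneg _) habs.le 2
                _ = (B.erase 1).card * (T / 4) := by rw [Finset.sum_const]; simp
                _ ≤ (φ : ℝ) * (T / 4) := by
                    gcongr
                    exact_mod_cast (Finset.card_le_card (Finset.subset_univ _)).trans_eq hcardU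
  -- finish arithmetic
  rw [hcard]
  have hrpos : (0 : ℝ) < r := by positivity
  have h1 : (φ : ℝ) ≤ (N : ℝ) * r + r + (φ : ℝ) / 4 := by
    have := hsplit
    nlinarith [hTpos]
  rw [div_le_iff₀ (by positivity)]
  nlinarith [h1, hr, hrpos]
end

section
/- Let $r \geq 2$ and $0 < \epsilon \leq 1/(2r)$. If $A$ is a real symmetric $r \times r$ matrix with $a_{jj} = 1$ for all $j$ and $|a_{jk}| \leq \epsilon$ for all $j \neq k$, then $|\det(A) - 1| \leq C \epsilon^2 r^2$ for some absolute constant $C$ (one may take $C = 2$). -/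
open Finset Equiv

lemma count_supp (r : ℕ) (S : Finset (Fin r)) :
    #(Finset.univ.filter (fun σ : Equiv.Perm (Fin r) => σ.support = S)) ≤ (#S).factorial := by
  classical
  have h : #(Finset.univ.filter (fun σ : Equiv.Perm (Fin r) => σ.support = S))
      ≤ #(Finset.univ : Finset (Equiv.Perm {x // x ∈ S})) := by
    apply Finset.card_le_card_of_injOn
      (fun σ => if h : ∀ x, x ∈ S ↔ σ x ∈ S then σ.subtypePerm (fun x => (h x).symm) else 1)
    · intro a _; exact Finset.mem_univ _
    · intro σ hσ τ hτ heq
      simp only [Finset.coe_filter, Set.mem_setOf_eq, Finset.mem_univ, true_and] at hσ hτ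
      have hσ' : ∀ x, x ∈ S ↔ σ x ∈ S := by
        intro x; rw [← hσ]; exact Equiv.Perm.apply_mem_support.symm
      have hτ' : ∀ x, x ∈ S ↔ τ x ∈ S := by
        intro x; rw [← hτ]; exact Equiv.Perm.apply_mem_support.symm
      simp only [dif_pos hσ', dif_pos hτ'] at heq
      ext x
      by_cases hx : x ∈ S
      · have h' : σ.subtypePerm (fun x => (hσ' x).symm) ⟨x, hx⟩ = τ.subtypePerm (fun x => (hτ' x).symm) ⟨x, hx⟩ := by rw [heq]
        have hval : σ x = τ x := by simpa using congrArg Subtype.val h'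
        rw [hval]
      · have h1 : σ x = x := Equiv.Perm.notMem_support.mp (by rwa [hσ])
        have h2 : τ x = x := Equiv.Perm.notMem_support.mp (by rwa [hτ])
        rw [h1, h2]
  simpa [Fintype.card_perm, Fintype.card_coe] using h

/-- Let `r ≥ 2` and `0 < ε ≤ 1/(2r)`. If `A` is a real symmetric `r × r`
matrix with unit diagonal and off-diagonal entries of absolute value at most `ε`, then
`|det A - 1| ≤ 2 ε² r²`. -/
theorem stmt2 (r : ℕ) (hr : 2 ≤ r) (ε : ℝ) (hε0 : 0 < ε) (hε : ε ≤ 1 / (2 * r))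
    (A : Matrix (Fin r) (Fin r) ℝ) (hsymm : A.IsSymm)
    (hdiag : ∀ j, A j j = 1) (hoff : ∀ j k, j ≠ k → |A j k| ≤ ε) :
    |A.det - 1| ≤ 2 * ε ^ 2 * r ^ 2 := by
  classical
  have hrpos : (0:ℝ) < r := by positivity
  set s : Finset (Equiv.Perm (Fin r)) := Finset.univ.erase 1 with hs
  have hdet : A.det - 1 = ∑ σ ∈ s, ((Equiv.Perm.sign σ : ℤ) : ℝ) * ∏ i, A (σ i) i := by
    rw [hs, Finset.sum_erase_eq_sub (Finset.mem_univ (1 : Equiv.Perm (Fin r))),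
      Matrix.det_apply']
    simp [hdiag]
  have h1 : |A.det - 1| ≤ ∑ σ ∈ s, ε ^ (#σ.support) := by
    rw [hdet]
    refine (Finset.abs_sum_le_sum_abs _ _).trans (Finset.sum_le_sum ?_)
    intro σ hσ
    rw [abs_mul]
    have hsign : |((Equiv.Perm.sign σ : ℤ) : ℝ)| = 1 := by
      rcases Int.units_eq_one_or (Equiv.Perm.sign σ) with h | h <;> simp [h]
    rw [hsign, one_mul, Finset.abs_prod]
    calc ∏ i, |A (σ i) i| ≤ ∏ i, (if i ∈ σ.support then ε else 1) := by
          apply Finset.prod_le_prod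
          · intro i _; exact abs_nonneg _
          · intro i _
            by_cases hi : i ∈ σ.support
            · simp only [hi, if_true]
              exact hoff _ _ (Equiv.Perm.mem_support.mp hi)
            · simp only [hi, if_false]
              rw [Equiv.Perm.notMem_support.mp hi, hdiag]
              simp
      _ = ε ^ #σ.support := by
          rw [Finset.prod_ite_mem, Finset.univ_inter, Finset.prod_const]
  -- group by support
  have h2 : ∑ σ ∈ s, ε ^ (#σ.support)
      = ∑ S ∈ (Finset.univ : Finset (Fin r)).powerset,
          (#(s.filter (fun σ => σ.support = S)) : ℝ) * ε ^ #S := by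
    rw [← Finset.sum_fiberwise_of_maps_to (g := fun σ : Equiv.Perm (Fin r) => σ.support)
      (t := (Finset.univ : Finset (Fin r)).powerset)
      (fun σ _ => Finset.mem_powerset.mpr (Finset.subset_univ _)) (fun σ => ε ^ (#σ.support))]
    refine Finset.sum_congr rfl fun S _ => ?_
    rw [Finset.sum_congr rfl (fun σ hσ => by
      rw [(Finset.mem_filter.mp hσ).2]), Finset.sum_const, nsmul_eq_mul]
  have h3 : ∀ S ∈ (Finset.univ : Finset (Fin r)).powerset,
      (#(s.filter (fun σ => σ.support = S)) : ℝ) * ε ^ #S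
        ≤ (if 2 ≤ #S then ((#S).factorial : ℝ) else 0) * ε ^ #S := by
    intro S _
    by_cases h2S : 2 ≤ #S
    · rw [if_pos h2S]
      apply mul_le_mul_of_nonneg_right _ (by positivity)
      exact_mod_cast (Finset.card_le_card (Finset.filter_subset_filter _
        (Finset.erase_subset _ _))).trans (count_supp r S)
    · rw [if_neg h2S, zero_mul]
      have : s.filter (fun σ => σ.support = S) = ∅ := by
        rw [Finset.filter_eq_empty_iff]
        intro σ hσ hsupp
        have hne : σ ≠ 1 := (Finset.mem_erase.mp hσ).1
        have h1lt := Equiv.Perm.one_lt_card_support_of_ne_one hne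
        rw [hsupp] at h1lt
        omega
      rw [this]
      simp
  have h4 : ∑ S ∈ (Finset.univ : Finset (Fin r)).powerset,
      (if 2 ≤ #S then ((#S).factorial : ℝ) else 0) * ε ^ #S
      = ∑ k ∈ Finset.range (r+1),
          (if 2 ≤ k then ((r.choose k : ℝ) * (k.factorial : ℝ)) else 0) * ε ^ k := by
    rw [Finset.sum_powerset]
    simp only [Finset.card_univ, Fintype.card_fin]
    refine Finset.sum_congr rfl fun k hk => ?_
    rw [Finset.sum_congr rfl (fun S hS => by
      rw [(Finset.mem_powersetCard.mp hS).2]), Finset.sum_const, nsmul_eq_mul,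
      Finset.card_powersetCard, Finset.card_univ, Fintype.card_fin]
    split_ifs <;> ring
  have h5 : ∑ k ∈ Finset.range (r+1),
      (if 2 ≤ k then ((r.choose k : ℝ) * (k.factorial : ℝ)) else 0) * ε ^ k
      ≤ ∑ k ∈ Finset.range (r+1), (if 2 ≤ k then ((r:ℝ) * ε) ^ k else 0) := by
    refine Finset.sum_le_sum fun k _ => ?_
    by_cases h2k : 2 ≤ k
    · rw [if_pos h2k, if_pos h2k, mul_pow]
      apply mul_le_mul_of_nonneg_right _ (by positivity)
      have : (r.choose k * k.factorial : ℕ) ≤ r ^ k := by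
        calc r.choose k * k.factorial = r.descFactorial k := by
              rw [Nat.descFactorial_eq_factorial_mul_choose]; ring
          _ ≤ r ^ k := Nat.descFactorial_le_pow r k
      exact_mod_cast this
    · rw [if_neg h2k, if_neg h2k, zero_mul]
  -- geometric tail
  have hx : (r:ℝ) * ε ≤ 1/2 := by
    have h := mul_le_mul_of_nonneg_left hε (le_of_lt hrpos)
    have heq : (r:ℝ) * (1/(2*(r:ℝ))) = 1/2 := by field_simp
    linarith
  have hx0 : (0:ℝ) ≤ (r:ℝ) * ε := by positivity
  have h6 : ∑ k ∈ Finset.range (r+1), (if 2 ≤ k then ((r:ℝ) * ε) ^ k else 0)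
      ≤ 2 * (((r:ℝ) * ε)) ^ 2 := by
    rw [← Finset.sum_filter]
    have hfil : (Finset.range (r+1)).filter (fun k => 2 ≤ k) = Finset.Ico 2 (r+1) := by
      ext k; simp [Finset.mem_filter, Finset.mem_Ico, and_comm]
    rw [hfil, Finset.sum_Ico_eq_sum_range]
    calc ∑ j ∈ Finset.range (r+1-2), ((r:ℝ)*ε) ^ (2 + j)
        = ((r:ℝ)*ε)^2 * ∑ j ∈ Finset.range (r+1-2), ((r:ℝ)*ε) ^ j := by
          rw [Finset.mul_sum]; exact Finset.sum_congr rfl fun j _ => by rw [pow_add]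
      _ ≤ ((r:ℝ)*ε)^2 * 2 := by
          apply mul_le_mul_of_nonneg_left _ (by positivity)
          calc ∑ j ∈ Finset.range (r+1-2), ((r:ℝ)*ε) ^ j
              ≤ ∑ j ∈ Finset.range (r+1-2), ((1:ℝ)/2) ^ j :=
                Finset.sum_le_sum fun j _ => pow_le_pow_left₀ hx0 hx j
            _ ≤ 2 := sum_geometric_two_le _
      _ = 2 * ((r:ℝ)*ε)^2 := by ring
  calc |A.det - 1| ≤ ∑ σ ∈ s, ε ^ (#σ.support) := h1
    _ = _ := h2
    _ ≤ _ := Finset.sum_le_sum h3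
    _ = _ := h4
    _ ≤ _ := h5
    _ ≤ 2 * (((r:ℝ)) * ε) ^ 2 := h6
    _ = 2 * ε ^ 2 * r ^ 2 := by ring
end

section
/- Let $r \geq 2$, $0 < \epsilon \leq 1/(2r)$, and let $A$ be a real symmetric $r \times r$ matrix with $a_{jj}=1$ and $|a_{jk}| \leq \epsilon$ for $j \neq k$. Then $A$ is invertible, and the entries $\tilde{a}_{jk}$ of $A^{-1}$ satisfy $|\tilde{a}_{jj} - 1| \leq C\epsilon^2 r^2$ for all $j$, and $|\tilde{a}_{jk}| \leq C\epsilon$ for all $j \neq k$, for some absolute constant $C$. -/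
/-- There is an absolute constant `C > 0` such that: for `r ≥ 2`,
`0 < ε ≤ 1/(2r)` and `A` a real symmetric `r × r` matrix with unit diagonal and off-diagonal
entries bounded by `ε`, the matrix `A` is invertible and the entries of `A⁻¹` satisfy
`|A⁻¹ j j - 1| ≤ C ε² r²` and `|A⁻¹ j k| ≤ C ε` for `j ≠ k`. -/
theorem stmt4 :
    ∃ C : ℝ, 0 < C ∧
      ∀ (r : ℕ), 2 ≤ r → ∀ (ε : ℝ), 0 < ε → ε ≤ 1 / (2 * r) →
        ∀ (A : Matrix (Fin r) (Fin r) ℝ), A.IsSymm →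
          (∀ j, A j j = 1) → (∀ j k, j ≠ k → |A j k| ≤ ε) →
          IsUnit A ∧
          (∀ j, |A⁻¹ j j - 1| ≤ C * ε ^ 2 * r ^ 2) ∧
          (∀ j k, j ≠ k → |A⁻¹ j k| ≤ C * ε) := by
  refine ⟨4, by norm_num, ?_⟩
  intro r hr ε hε hεr A _hsymm hdiag hoff
  have hr0 : (0:ℝ) < r := by positivity
  have hr1 : (1:ℝ) ≤ r := by exact_mod_cast le_trans (by norm_num) hr
  have hre : (r:ℝ) * ε ≤ 1/2 := by
    rw [le_div_iff₀ (by positivity)] at hεr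
    nlinarith
  have hcard : ∀ k : Fin r, ((Finset.univ.erase k).card : ℝ) ≤ r := by
    intro k
    exact_mod_cast Finset.card_erase_le.trans (by simp)
  -- invertibility via diagonal dominance
  have hdet : A.det ≠ 0 := by
    intro h0
    obtain ⟨v, hv, hAv⟩ := (Matrix.exists_mulVec_eq_zero_iff).2 h0
    obtain ⟨j, -, hj⟩ := Finset.exists_max_image Finset.univ (fun k => |v k|)
      ⟨⟨0, by omega⟩, Finset.mem_univ _⟩
    have h1 : ∑ k, A j k * v k = 0 := by
      have := congrFun hAv j
      simpa [Matrix.mulVec, dotProduct] using this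
    have h2 : v j = -∑ k ∈ Finset.univ.erase j, A j k * v k := by
      rw [← Finset.add_sum_erase _ _ (Finset.mem_univ j), hdiag j, one_mul] at h1
      linarith
    have h3 : |v j| ≤ (r:ℝ) * ε * |v j| := by
      conv_lhs => rw [h2, abs_neg]
      calc |∑ k ∈ Finset.univ.erase j, A j k * v k|
          ≤ ∑ k ∈ Finset.univ.erase j, |A j k * v k| := Finset.abs_sum_le_sum_abs _ _
        _ ≤ ∑ _k ∈ Finset.univ.erase j, ε * |v j| := by
            refine Finset.sum_le_sum fun k hk => ?_
            rw [abs_mul]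
            have hkj : j ≠ k := fun h => (Finset.mem_erase.1 hk).1 h.symm
            exact mul_le_mul (hoff j k hkj) (hj k (Finset.mem_univ k)) (abs_nonneg _)
              (le_trans (abs_nonneg _) (hoff j k hkj))
        _ = ((Finset.univ.erase j).card : ℝ) * (ε * |v j|) := by
            rw [Finset.sum_const, nsmul_eq_mul]
        _ ≤ (r:ℝ) * (ε * |v j|) := mul_le_mul_of_nonneg_right (hcard j) (by positivity)
        _ = (r:ℝ) * ε * |v j| := by ring
    have hvj : v j = 0 := by
      have h4 : |v j| ≤ (1/2) * |v j| := le_trans h3 (by nlinarith [abs_nonneg (v j)])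
      have h5 : |v j| ≤ 0 := by linarith
      exact abs_eq_zero.1 (le_antisymm h5 (abs_nonneg _))
    apply hv
    funext k
    have hk := hj k (Finset.mem_univ k)
    rw [hvj, abs_zero] at hk
    exact abs_eq_zero.1 (le_antisymm hk (abs_nonneg _))
  have hdetU : IsUnit A.det := isUnit_iff_ne_zero.2 hdet
  have hU : IsUnit A := (Matrix.isUnit_iff_isUnit_det A).2 hdetU
  have hBA : A⁻¹ * A = 1 := Matrix.nonsing_inv_mul A hdetU
  set B := A⁻¹ with hB
  -- key entrywise identity bound
  have key : ∀ j k, |B j k - (if j = k then (1:ℝ) else 0)|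
      ≤ ε * ∑ l ∈ Finset.univ.erase k, |B j l| := by
    intro j k
    have h1 : ∑ l, B j l * A l k = (if j = k then (1:ℝ) else 0) := by
      have := congrFun (congrFun hBA j) k
      simpa [Matrix.mul_apply, Matrix.one_apply] using this
    rw [← Finset.add_sum_erase _ _ (Finset.mem_univ k), hdiag k, mul_one] at h1
    have h2 : B j k - (if j = k then (1:ℝ) else 0)
        = -∑ l ∈ Finset.univ.erase k, B j l * A l k := by linarith
    rw [h2, abs_neg, Finset.mul_sum]
    refine le_trans (Finset.abs_sum_le_sum_abs _ _) (Finset.sum_le_sum fun l hl => ?_)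
    rw [abs_mul, mul_comm]
    exact mul_le_mul_of_nonneg_right (hoff l k (Finset.mem_erase.1 hl).1) (abs_nonneg _)
  -- uniform bound: all entries ≤ 2
  have hM : ∀ j k, |B j k| ≤ 2 := by
    intro j
    obtain ⟨k0, -, hk0⟩ := Finset.exists_max_image Finset.univ (fun l => |B j l|)
      ⟨⟨0, by omega⟩, Finset.mem_univ _⟩
    have hM0 : (0:ℝ) ≤ |B j k0| := abs_nonneg _
    have step : ∀ k, |B j k| ≤ 1 + (1/2) * |B j k0| := by
      intro k
      have h1 := key j k
      have h2 : ε * ∑ l ∈ Finset.univ.erase k, |B j l| ≤ (1/2) * |B j k0| := by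
        have hs : ∑ l ∈ Finset.univ.erase k, |B j l|
            ≤ ((Finset.univ.erase k).card : ℝ) * |B j k0| := by
          simpa [nsmul_eq_mul] using Finset.sum_le_card_nsmul (Finset.univ.erase k)
            (fun l => |B j l|) (|B j k0|) (fun l _ => hk0 l (Finset.mem_univ l))
        calc ε * ∑ l ∈ Finset.univ.erase k, |B j l|
            ≤ ε * ((r:ℝ) * |B j k0|) := by
              refine mul_le_mul_of_nonneg_left (le_trans hs ?_) hε.le
              exact mul_le_mul_of_nonneg_right (hcard k) hM0
          _ = ((r:ℝ) * ε) * |B j k0| := by ring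
          _ ≤ (1/2) * |B j k0| := mul_le_mul_of_nonneg_right hre hM0
      have h3 : |B j k| - |(if j = k then (1:ℝ) else 0)|
          ≤ |B j k - (if j = k then (1:ℝ) else 0)| := abs_sub_abs_le_abs_sub _ _
      have h4 : |(if j = k then (1:ℝ) else 0)| ≤ 1 := by split <;> simp
      linarith
    have hMle : |B j k0| ≤ 2 := by have := step k0; linarith
    intro k
    exact le_trans (step k) (by linarith)
  -- off-diagonal bound: ≤ 4ε
  have hN : ∀ j k, j ≠ k → |B j k| ≤ 4 * ε := by
    intro j
    obtain ⟨j', hj'⟩ := Fintype.exists_ne_of_one_lt_card (by simp only [Fintype.card_fin]; omega) j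
    have hne : (Finset.univ.erase j).Nonempty :=
      ⟨j', Finset.mem_erase.2 ⟨hj', Finset.mem_univ _⟩⟩
    obtain ⟨k0, hk0mem, hk0⟩ := Finset.exists_max_image (Finset.univ.erase j)
      (fun l => |B j l|) hne
    have hN0 : (0:ℝ) ≤ |B j k0| := abs_nonneg _
    have step : ∀ k, j ≠ k → |B j k| ≤ 2 * ε + (1/2) * |B j k0| := by
      intro k hjk
      have h1 := key j k
      rw [if_neg hjk, sub_zero] at h1
      have hjk' : j ∈ Finset.univ.erase k := Finset.mem_erase.2 ⟨hjk, Finset.mem_univ _⟩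
      have hsplit : ∑ l ∈ Finset.univ.erase k, |B j l|
          = |B j j| + ∑ l ∈ (Finset.univ.erase k).erase j, |B j l| :=
        (Finset.add_sum_erase _ _ hjk').symm
      have h2 : ∑ l ∈ (Finset.univ.erase k).erase j, |B j l| ≤ (r:ℝ) * |B j k0| := by
        have hs : ∑ l ∈ (Finset.univ.erase k).erase j, |B j l|
            ≤ (((Finset.univ.erase k).erase j).card : ℝ) * |B j k0| := by
          simpa [nsmul_eq_mul] using Finset.sum_le_card_nsmul ((Finset.univ.erase k).erase j)
            (fun l => |B j l|) (|B j k0|) (fun l hl => hk0 l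
              (Finset.mem_erase.2 ⟨(Finset.mem_erase.1 hl).1, Finset.mem_univ _⟩))
        refine le_trans hs (mul_le_mul_of_nonneg_right ?_ hN0)
        exact_mod_cast (Finset.card_erase_le.trans Finset.card_erase_le).trans (by simp)
      calc |B j k| ≤ ε * ∑ l ∈ Finset.univ.erase k, |B j l| := h1
        _ = ε * (|B j j| + ∑ l ∈ (Finset.univ.erase k).erase j, |B j l|) := by rw [hsplit]
        _ ≤ ε * (2 + (r:ℝ) * |B j k0|) := by
            refine mul_le_mul_of_nonneg_left (add_le_add (hM j j) h2) hε.le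
        _ = 2 * ε + ((r:ℝ) * ε) * |B j k0| := by ring
        _ ≤ 2 * ε + (1/2) * |B j k0| := by
            have := mul_le_mul_of_nonneg_right hre hN0
            linarith
    have hNle : |B j k0| ≤ 4 * ε := by
      have := step k0 fun h => (Finset.mem_erase.1 hk0mem).1 h.symm
      linarith
    intro k hjk
    exact le_trans (step k hjk) (by linarith)
  refine ⟨hU, ?_, fun j k hjk => hN j k hjk⟩
  intro j
  have h1 := key j j
  rw [if_pos rfl] at h1
  have h2 : ∑ l ∈ Finset.univ.erase j, |B j l| ≤ (r:ℝ) * (4 * ε) := by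
    have hs : ∑ l ∈ Finset.univ.erase j, |B j l|
        ≤ ((Finset.univ.erase j).card : ℝ) * (4 * ε) := by
      simpa [nsmul_eq_mul] using Finset.sum_le_card_nsmul (Finset.univ.erase j)
        (fun l => |B j l|) (4 * ε) (fun l hl => hN j l
          fun h => (Finset.mem_erase.1 hl).1 h.symm)
    exact le_trans hs (mul_le_mul_of_nonneg_right (hcard j) (by positivity))
  have hr2 : (r:ℝ) ≤ (r:ℝ)^2 := by nlinarith
  calc |B j j - 1| ≤ ε * ((r:ℝ) * (4 * ε)) :=
        le_trans h1 (mul_le_mul_of_nonneg_left h2 hε.le)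
    _ = 4 * ε^2 * (r:ℝ) := by ring
    _ ≤ 4 * ε^2 * (r:ℝ)^2 := by nlinarith [sq_nonneg ε]
end

section
/- The Bessel function of order zero, $J_0(z) = \sum_{m=0}^{\infty} (-1)^m (z/2)^{2m}/(m!)^2$, satisfies $|J_0(x)| \leq \exp(-x^2/4)$ for all real $x$ with $|x| \leq 1$. -/
/-- The Bessel function of the first kind of order zero,
`J₀(z) = ∑ (-1)^m (z/2)^{2m}/(m!)²`. -/
noncomputable def besselJ0 (z : ℝ) : ℝ :=
  ∑' m : ℕ, (-1) ^ m * (z / 2) ^ (2 * m) / (Nat.factorial m) ^ 2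

/-- `|J₀(x)| ≤ exp(-x²/4)` for all real `x` with `|x| ≤ 1`. -/
theorem stmt11 (x : ℝ) (hx : |x| ≤ 1) : |besselJ0 x| ≤ Real.exp (-x ^ 2 / 4) := by
  set t : ℝ := x ^ 2 / 4 with ht
  have ht0 : 0 ≤ t := by positivity
  have hx1 : x ^ 2 ≤ 1 := by
    have := abs_le.mp hx
    nlinarith
  have ht1 : t ≤ 1 / 4 := by rw [ht]; linarith
  have ht1' : t ≤ 1 := by linarith
  set c : ℕ → ℝ := fun m => t ^ m / (Nat.factorial m : ℝ) ^ 2 with hc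
  set d : ℕ → ℝ := fun m => t ^ m / (Nat.factorial m : ℝ) with hd
  have hfacpos : ∀ m : ℕ, (0 : ℝ) < (Nat.factorial m : ℝ) := fun m => by
    exact_mod_cast Nat.factorial_pos m
  have hcnonneg : ∀ m, 0 ≤ c m := fun m => by
    have := hfacpos m; positivity
  have hdnonneg : ∀ m, 0 ≤ d m := fun m => by
    have := hfacpos m; positivity
  have hcanti : Antitone c := by
    refine antitone_nat_of_succ_le fun m => ?_
    have h1 : t ^ (m + 1) ≤ t ^ m := pow_le_pow_of_le_one ht0 ht1' (by omega)
    have h2 : ((Nat.factorial m : ℝ)) ^ 2 ≤ ((Nat.factorial (m + 1) : ℝ)) ^ 2 := by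
      have : (Nat.factorial m : ℝ) ≤ (Nat.factorial (m + 1) : ℝ) := by
        exact_mod_cast Nat.factorial_le (by omega)
      nlinarith [hfacpos m]
    exact div_le_div₀ (by positivity) h1 (by positivity) h2
  have hdanti : Antitone d := by
    refine antitone_nat_of_succ_le fun m => ?_
    have h1 : t ^ (m + 1) ≤ t ^ m := pow_le_pow_of_le_one ht0 ht1' (by omega)
    have h2 : ((Nat.factorial m : ℝ)) ≤ ((Nat.factorial (m + 1) : ℝ)) := by
      exact_mod_cast Nat.factorial_le (by omega)
    exact div_le_div₀ (by positivity) h1 (hfacpos m) h2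
  -- summability of c
  have hcsum : Summable c := by
    refine Summable.of_nonneg_of_le hcnonneg (fun m => ?_)
      (Real.summable_pow_div_factorial t)
    have h1 : (1 : ℝ) ≤ (Nat.factorial m : ℝ) := by
      exact_mod_cast Nat.one_le_iff_ne_zero.mpr (Nat.factorial_ne_zero m)
    have h2 : (Nat.factorial m : ℝ) ≤ ((Nat.factorial m : ℝ)) ^ 2 := by nlinarith
    exact div_le_div₀ (by positivity) le_rfl (hfacpos m) h2
  have hfsum : Summable (fun m => (-1 : ℝ) ^ m * c m) := by
    refine Summable.of_abs ?_
    have : (fun m => |(-1 : ℝ) ^ m * c m|) = c := by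
      funext m
      rw [abs_mul, abs_pow, abs_neg, abs_one, one_pow, one_mul, abs_of_nonneg (hcnonneg m)]
    rwa [this]
  -- besselJ0 x is the sum of the alternating series of c
  have hbJ : besselJ0 x = ∑' m : ℕ, (-1 : ℝ) ^ m * c m := by
    unfold besselJ0
    congr 1
    funext m
    have : (x / 2) ^ (2 * m) = t ^ m := by
      rw [pow_mul]
      congr 1
      rw [ht]; ring
    rw [hc]
    rw [this]
    ring
  have htendc : Filter.Tendsto (fun n => ∑ i ∈ Finset.range n, (-1 : ℝ) ^ i * c i)
      Filter.atTop (nhds (besselJ0 x)) := by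
    rw [hbJ]
    exact hfsum.hasSum.tendsto_sum_nat
  -- lower bound: 0 ≤ besselJ0 x
  have h0 : 0 ≤ besselJ0 x := by
    have := hcanti.alternating_series_le_tendsto htendc 0
    simpa using this
  -- upper bound: besselJ0 x ≤ 1 - t + t^2/4
  have hup : besselJ0 x ≤ 1 - t + t ^ 2 / 4 := by
    have := hcanti.tendsto_le_alternating_series htendc 1
    have hs : ∑ i ∈ Finset.range (2 * 1 + 1), (-1 : ℝ) ^ i * c i = 1 - t + t ^ 2 / 4 := by
      simp [Finset.sum_range_succ, hc, Nat.factorial]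
      ring
    linarith [hs ▸ this]
  -- exp(-t) as alternating series of d
  have hexp : HasSum (fun n => (-1 : ℝ) ^ n * d n) (Real.exp (-t)) := by
    have h := NormedSpace.expSeries_div_hasSum_exp (-t)
    rw [← Real.exp_eq_exp_ℝ] at h
    have heq : (fun n => (-t) ^ n / (Nat.factorial n : ℝ)) = fun n => (-1 : ℝ) ^ n * d n := by
      funext n
      rw [hd, neg_pow]
      ring
    rwa [heq] at h
  have htendd : Filter.Tendsto (fun n => ∑ i ∈ Finset.range n, (-1 : ℝ) ^ i * d i)
      Filter.atTop (nhds (Real.exp (-t))) := hexp.tendsto_sum_nat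
  have hlow : 1 - t + t ^ 2 / 2 - t ^ 3 / 6 ≤ Real.exp (-t) := by
    have := hdanti.alternating_series_le_tendsto htendd 2
    have hs : ∑ i ∈ Finset.range (2 * 2), (-1 : ℝ) ^ i * d i
        = 1 - t + t ^ 2 / 2 - t ^ 3 / 6 := by
      simp [Finset.sum_range_succ, hd, Nat.factorial]
      ring
    linarith [hs ▸ this]
  have hkey : 1 - t + t ^ 2 / 4 ≤ 1 - t + t ^ 2 / 2 - t ^ 3 / 6 := by
    nlinarith [sq_nonneg t]
  have : -x ^ 2 / 4 = -t := by rw [ht]; ring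
  rw [this, abs_of_nonneg h0]
  linarith
end
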